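/- (Markov chains induced by interactive encoding of two nodes, item 3.) For every t ∈ {1,…,n} and every l ∈ {1,…,K}, the Markov chain (J_y^l, Y_{[1:t-1]}) −∘− (J_x^{[1:l]}, J_y^{[1:l-1]}, X_{[1:t-1]}, Y_{[t:n]}) −∘− (X_t, Z_t) holds; equivalently, I(J_y^l, Y_{[1:t-1]} ; X_t, Z_t | J_x^{[1:l]}, J_y^{[1:l-1]}, X_{[1:t-1]}, Y_{[t:n]}) = 0. -/

import Mathlib

noncomputable section

namespace IT

variable {Ω : Type*} [Fintype Ω]

open Classical in
/-- Probability of an event under a weight function on a finite sample space. -/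
def pr (w : Ω → ℝ) (E : Ω → Prop) : ℝ := ∑ ω, if E ω then w ω else 0

open Classical in
/-- The distribution (pmf) of a random variable. -/
def dist (w : Ω → ℝ) {α : Type*} [Fintype α] (X : Ω → α) (a : α) : ℝ :=
  ∑ ω, if X ω = a then w ω else 0

/-- Shannon entropy (base 2). -/
def H (w : Ω → ℝ) {α : Type*} [Fintype α] (X : Ω → α) : ℝ :=
  -∑ a, dist w X a * Real.logb 2 (dist w X a)

/-- Conditional entropy H(X|Y). -/
def condH (w : Ω → ℝ) {α β : Type*} [Fintype α] [Fintype β] (X : Ω → α) (Y : Ω → β) : ℝ :=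
  H w (fun ω => (X ω, Y ω)) - H w Y

/-- Mutual information I(X;Y). -/
def mutInfo (w : Ω → ℝ) {α β : Type*} [Fintype α] [Fintype β] (X : Ω → α) (Y : Ω → β) : ℝ :=
  H w X + H w Y - H w (fun ω => (X ω, Y ω))

/-- Conditional mutual information I(X;Y|Z). -/
def condMutInfo (w : Ω → ℝ) {α β γ : Type*} [Fintype α] [Fintype β] [Fintype γ]
    (X : Ω → α) (Y : Ω → β) (Z : Ω → γ) : ℝ :=
  condH w X Z - condH w X (fun ω => (Y ω, Z ω))

/-- Expectation of a real random variable. -/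
def expect (w : Ω → ℝ) (f : Ω → ℝ) : ℝ := ∑ ω, w ω * f ω

end IT

/-- `p` is a probability mass function on a finite type. -/
def IsPMF {α : Type*} [Fintype α] (p : α → ℝ) : Prop := (∀ a, 0 ≤ p a) ∧ ∑ a, p a = 1

/-- The i.i.d. (product) weight on `n`-sequences induced by a single-letter pmf. -/
def iidW {α : Type*} (p : α → ℝ) (n : ℕ) : (Fin n → α) → ℝ := fun x => ∏ t, p (x t)

/-- The first `l` components of a dependent tuple (the rest masked). -/
def trunc {K : ℕ} {γ : Fin K → Type*} (l : ℕ) (f : (k : Fin K) → γ k) :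
    (k : Fin K) → Option (γ k) :=
  fun k => if k.val < l then some (f k) else none

/-- Coordinates with (0-based) index `< t`. -/
def below {n : ℕ} {α : Type*} (t : ℕ) (x : Fin n → α) : Fin n → Option α :=
  fun s => if s.val < t then some (x s) else none

/-- Coordinates with (0-based) index `> t`. -/
def above {n : ℕ} {α : Type*} (t : ℕ) (x : Fin n → α) : Fin n → Option α :=
  fun s => if t < s.val then some (x s) else none

/-- Coordinates with (0-based) index `≥ t`. -/
def fromIdx {n : ℕ} {α : Type*} (t : ℕ) (x : Fin n → α) : Fin n → Option α :=
  fun s => if t ≤ s.val then some (x s) else none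

open Classical in
/-- Number of occurrences of `a` in the sequence `x`. -/
def Nocc {n : ℕ} {α : Type*} (a : α) (x : Fin n → α) : ℕ :=
  (Finset.univ.filter fun t => x t = a).card

/-- Strongly typical set. -/
def typical {α : Type*} [Fintype α] (Q : α → ℝ) (δ : ℝ) (n : ℕ) : Set (Fin n → α) :=
  {x | ∀ a, Q a ≠ 0 → |(Nocc a x : ℝ) / n - Q a| ≤ δ / Fintype.card α}


open IT


namespace IT
variable {Ω : Type*} [Fintype Ω]

lemma dist_nonneg'' (w : Ω → ℝ) (hw : ∀ ω, 0 ≤ w ω) {α : Type*} [Fintype α] (X : Ω → α) (a : α) :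
    0 ≤ dist w X a := by
  classical
  unfold dist
  refine Finset.sum_nonneg fun ω _ => ?_
  split <;> simp [hw]

open Classical in
lemma sum_ite_eq_dist {α β : Type*} [Fintype α] [Fintype β] (w : Ω → ℝ)
    (X : Ω → α) (Y : Ω → β) (b : β) :
    ∑ a, dist w (fun ω => (X ω, Y ω)) (a, b) = dist w Y b := by
  classical
  unfold dist
  rw [Finset.sum_comm]
  refine Finset.sum_congr rfl fun ω _ => ?_
  by_cases hY : Y ω = b
  · subst hY
    simp [Prod.ext_iff]
  · simp [Prod.ext_iff, hY]

lemma condMutInfo_eq_zero_of_indep {α β γ : Type*} [Fintype α] [Fintype β] [Fintype γ]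
    (w : Ω → ℝ) (hw : ∀ ω, 0 ≤ w ω) (A : Ω → α) (B : Ω → β) (C : Ω → γ)
    (h : ∀ a b c, dist w (fun ω => (A ω, B ω, C ω)) (a, b, c) * dist w C c
      = dist w (fun ω => (A ω, C ω)) (a, c) * dist w (fun ω => (B ω, C ω)) (b, c)) :
    condMutInfo w A B C = 0 := by
  classical
  set p3 : α → β → γ → ℝ := fun a b c => dist w (fun ω => (A ω, B ω, C ω)) (a, b, c) with hp3
  set pac : α → γ → ℝ := fun a c => dist w (fun ω => (A ω, C ω)) (a, c) with hpac
  set pbc : β → γ → ℝ := fun b c => dist w (fun ω => (B ω, C ω)) (b, c) with hpbc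
  set q : γ → ℝ := fun c => dist w C c with hq
  have hp3n : ∀ a b c, 0 ≤ p3 a b c := fun a b c => dist_nonneg'' w hw _ _
  -- marginals
  have marg1 : ∀ a c, ∑ b, p3 a b c = pac a c := by
    intro a c
    unfold p3 pac
    unfold dist
    rw [Finset.sum_comm]
    refine Finset.sum_congr rfl fun ω _ => ?_
    by_cases hA : A ω = a
    · by_cases hC : C ω = c
      · subst hA; subst hC; simp [Prod.ext_iff]
      · simp [Prod.ext_iff, hC]
    · simp [Prod.ext_iff, hA]
  have marg2 : ∀ b c, ∑ a, p3 a b c = pbc b c := by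
    intro b c
    unfold p3 pbc
    unfold dist
    rw [Finset.sum_comm]
    refine Finset.sum_congr rfl fun ω _ => ?_
    by_cases hB : B ω = b
    · by_cases hC : C ω = c
      · subst hB; subst hC; simp [Prod.ext_iff]
      · simp [Prod.ext_iff, hC]
    · simp [Prod.ext_iff, hB]
  have marg3 : ∀ c, ∑ b, pbc b c = q c := by
    intro c
    unfold pbc q
    unfold dist
    rw [Finset.sum_comm]
    refine Finset.sum_congr rfl fun ω _ => ?_
    by_cases hC : C ω = c
    · subst hC; simp [Prod.ext_iff]
    · simp [Prod.ext_iff, hC]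
  -- bounds
  have hpacn : ∀ a c, 0 ≤ pac a c := fun a c => dist_nonneg'' w hw _ _
  have hpbcn : ∀ b c, 0 ≤ pbc b c := fun b c => dist_nonneg'' w hw _ _
  have hle1 : ∀ a b c, p3 a b c ≤ pac a c := by
    intro a b c
    rw [← marg1 a c]
    exact Finset.single_le_sum (fun b _ => hp3n a b c) (Finset.mem_univ b)
  have hle2 : ∀ a b c, p3 a b c ≤ pbc b c := by
    intro a b c
    rw [← marg2 b c]
    exact Finset.single_le_sum (fun a _ => hp3n a b c) (Finset.mem_univ a)
  have hle3 : ∀ b c, pbc b c ≤ q c := by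
    intro b c
    rw [← marg3 c]
    exact Finset.single_le_sum (fun b _ => hpbcn b c) (Finset.mem_univ b)
  -- entropies as iterated sums
  have HABC : H w (fun ω => (A ω, (B ω, C ω)))
      = -∑ a, ∑ b, ∑ c, p3 a b c * Real.logb 2 (p3 a b c) := by
    unfold H
    congr 1
    rw [Fintype.sum_prod_type]
    refine Finset.sum_congr rfl fun a _ => ?_
    rw [Fintype.sum_prod_type]
  have HAC : H w (fun ω => (A ω, C ω)) = -∑ a, ∑ c, pac a c * Real.logb 2 (pac a c) := by
    unfold H
    congr 1
    rw [Fintype.sum_prod_type]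
  have HBC : H w (fun ω => (B ω, C ω)) = -∑ b, ∑ c, pbc b c * Real.logb 2 (pbc b c) := by
    unfold H
    congr 1
    rw [Fintype.sum_prod_type]
  have HC : H w C = -∑ c, q c * Real.logb 2 (q c) := rfl
  -- the key pointwise identity
  have key : ∀ a b c, p3 a b c * Real.logb 2 (p3 a b c)
      = p3 a b c * (Real.logb 2 (pac a c) + Real.logb 2 (pbc b c) - Real.logb 2 (q c)) := by
    intro a b c
    by_cases h0 : p3 a b c = 0
    · rw [h0]; ring
    · have hpos : 0 < p3 a b c := lt_of_le_of_ne (hp3n a b c) (Ne.symm h0)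
      have hac : (0:ℝ) < pac a c := lt_of_lt_of_le hpos (hle1 a b c)
      have hbc : (0:ℝ) < pbc b c := lt_of_lt_of_le hpos (hle2 a b c)
      have hqc : (0:ℝ) < q c := lt_of_lt_of_le hbc (hle3 b c)
      have hfac : p3 a b c = pac a c * pbc b c / q c := by
        field_simp
        exact h a b c
      rw [hfac, Real.logb_div (by positivity) (ne_of_gt hqc),
        Real.logb_mul (ne_of_gt hac) (ne_of_gt hbc)]
  -- summed identities
  have margac : ∀ c, ∑ a, pac a c = q c := fun c => sum_ite_eq_dist w A C c
  have E1 : ∑ a, ∑ b, ∑ c, p3 a b c * Real.logb 2 (pac a c)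
      = ∑ a, ∑ c, pac a c * Real.logb 2 (pac a c) := by
    refine Finset.sum_congr rfl fun a _ => ?_
    rw [Finset.sum_comm]
    refine Finset.sum_congr rfl fun c _ => ?_
    rw [← Finset.sum_mul, marg1]
  have E2 : ∑ a, ∑ b, ∑ c, p3 a b c * Real.logb 2 (pbc b c)
      = ∑ b, ∑ c, pbc b c * Real.logb 2 (pbc b c) := by
    rw [Finset.sum_comm]
    refine Finset.sum_congr rfl fun b _ => ?_
    rw [Finset.sum_comm]
    refine Finset.sum_congr rfl fun c _ => ?_
    rw [← Finset.sum_mul, marg2]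
  have E3 : ∑ a, ∑ b, ∑ c, p3 a b c * Real.logb 2 (q c)
      = ∑ c, q c * Real.logb 2 (q c) := by
    have step : ∀ a, ∑ b, ∑ c, p3 a b c * Real.logb 2 (q c)
        = ∑ c, pac a c * Real.logb 2 (q c) := by
      intro a
      rw [Finset.sum_comm]
      refine Finset.sum_congr rfl fun c _ => ?_
      rw [← Finset.sum_mul, marg1]
    calc ∑ a, ∑ b, ∑ c, p3 a b c * Real.logb 2 (q c)
        = ∑ a, ∑ c, pac a c * Real.logb 2 (q c) := Finset.sum_congr rfl fun a _ => step a
      _ = ∑ c, ∑ a, pac a c * Real.logb 2 (q c) := by rw [Finset.sum_comm]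
      _ = ∑ c, q c * Real.logb 2 (q c) := by
          refine Finset.sum_congr rfl fun c _ => ?_
          rw [← Finset.sum_mul, margac]
  have main : ∑ a, ∑ b, ∑ c, p3 a b c * Real.logb 2 (p3 a b c)
      = (∑ a, ∑ c, pac a c * Real.logb 2 (pac a c))
        + (∑ b, ∑ c, pbc b c * Real.logb 2 (pbc b c))
        - (∑ c, q c * Real.logb 2 (q c)) := by
    have expand : ∑ a, ∑ b, ∑ c, p3 a b c * Real.logb 2 (p3 a b c)
        = ∑ a, ∑ b, ∑ c, (p3 a b c * Real.logb 2 (pac a c)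
            + p3 a b c * Real.logb 2 (pbc b c) - p3 a b c * Real.logb 2 (q c)) := by
      refine Finset.sum_congr rfl fun a _ => Finset.sum_congr rfl fun b _ =>
        Finset.sum_congr rfl fun c _ => ?_
      rw [key a b c]; ring
    rw [expand]
    simp only [Finset.sum_sub_distrib, Finset.sum_add_distrib]
    rw [E1, E2, E3]
  unfold condMutInfo condH
  rw [HABC, HAC, HBC, HC]
  linarith [main]

end IT

lemma aux_ite_mul_ite {a b : Prop} [Decidable a] [Decidable b] (x y : ℝ) :
    (if a then x else 0) * (if b then y else 0) = if a ∧ b then x * y else 0 := by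
  by_cases ha : a <;> by_cases hb : b <;> simp [ha, hb]

section Swap

variable {γ : Type*} [Fintype γ]

/-- interleave: take coordinates `< t` from the first, the rest from the second. -/
def auxMix (n t : ℕ) (ω ω' : Fin n → γ) : Fin n → γ :=
  fun s => if s.val < t then ω s else ω' s

lemma below_auxMix (n t : ℕ) (ω ω' : Fin n → γ) :
    below t (auxMix n t ω ω') = below t ω := by
  funext s
  unfold below auxMix
  by_cases h : s.val < t <;> simp [h]

lemma fromIdx_auxMix (n t : ℕ) (ω ω' : Fin n → γ) :
    fromIdx t (auxMix n t ω ω') = fromIdx t ω' := by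
  funext s
  unfold fromIdx auxMix
  by_cases h : t ≤ s.val
  · simp [h, Nat.not_lt.mpr h]
  · simp [h]

lemma iidW_auxMix (p : γ → ℝ) (n t : ℕ) (ω ω' : Fin n → γ) :
    iidW p n (auxMix n t ω ω') * iidW p n (auxMix n t ω' ω) = iidW p n ω * iidW p n ω' := by
  unfold iidW auxMix
  rw [← Finset.prod_mul_distrib, ← Finset.prod_mul_distrib]
  refine Finset.prod_congr rfl fun s _ => ?_
  by_cases h : s.val < t <;> simp [h, mul_comm]

lemma pr_mul_pr_swap [Fintype γ] (p : γ → ℝ) (n t : ℕ)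
    (P P' Q Q' : (Fin n → Option γ) → Prop) :
    pr (iidW p n) (fun ω => P (below t ω) ∧ Q (fromIdx t ω)) *
      pr (iidW p n) (fun ω => P' (below t ω) ∧ Q' (fromIdx t ω)) =
    pr (iidW p n) (fun ω => P (below t ω) ∧ Q' (fromIdx t ω)) *
      pr (iidW p n) (fun ω => P' (below t ω) ∧ Q (fromIdx t ω)) := by
  classical
  unfold pr
  rw [Finset.sum_mul_sum, Finset.sum_mul_sum]
  rw [← Finset.sum_product', ← Finset.sum_product']
  have hinv : Function.Involutive
      (fun x : (Fin n → γ) × (Fin n → γ) => (auxMix n t x.1 x.2, auxMix n t x.2 x.1)) := by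
    intro x
    unfold auxMix
    refine Prod.ext (funext fun s => ?_) (funext fun s => ?_) <;>
      by_cases h : s.val < t <;> simp [h]
  refine Fintype.sum_equiv hinv.toPerm _ _ fun x => ?_
  obtain ⟨ω, ω'⟩ := x
  simp only [Function.Involutive.coe_toPerm]
  simp only [below_auxMix, fromIdx_auxMix]
  by_cases h1 : P (below t ω) <;> by_cases h2 : Q (fromIdx t ω) <;>
    by_cases h3 : P' (below t ω') <;> by_cases h4 : Q' (fromIdx t ω') <;>
    simp [h1, h2, h3, h4, iidW_auxMix]

end Swap

lemma pr_congr {Ω : Type*} [Fintype Ω] (w : Ω → ℝ) {E F : Ω → Prop} (h : ∀ ω, E ω ↔ F ω) :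
    pr w E = pr w F := by
  classical
  unfold pr
  exact Finset.sum_congr rfl fun ω _ => by rw [if_congr (h ω) rfl rfl]

lemma trunc_eq_trunc_iff {K : ℕ} {γ : Fin K → Type*} (m : ℕ) (f g : (k : Fin K) → γ k) :
    trunc m f = trunc m g ↔ ∀ k : Fin K, k.val < m → f k = g k := by
  constructor
  · intro h k hk
    have := congrFun h k
    simpa [trunc, hk] using this
  · intro h
    funext k
    unfold trunc
    split_ifs with hk
    · exact congrArg some (h k hk)
    · rfl



/-- **Lemma (interactive encoding of two nodes), item 3:**
`(J_y^l, Y_{[1:t-1]}) -∘- (J_x^{[1:l]}, J_y^{[1:l-1]}, X_{[1:t-1]}, Y_{[t:n]}) -∘- (X_t, Z_t)`. -/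
theorem two_node_interactive_markov_item3
    {XA YA ZA : Type} [Fintype XA] [Fintype YA] [Fintype ZA]
    (p : XA × YA × ZA → ℝ) (hp : IsPMF p)
    {n K : ℕ} (mx my : Fin K → ℕ)
    (Jx : (l : Fin K) → (Fin n → XA × YA × ZA) → Fin (mx l))
    (Jy : (l : Fin K) → (Fin n → XA × YA × ZA) → Fin (my l))
    -- J_x^l = f_x^l(Xⁿ, J_x^{[1:l-1]}, J_y^{[1:l-1]})
    (hJx : ∀ l : Fin K, ∃ f : (Fin n → XA) →
        ((k : Fin K) → k.val < l.val → Fin (mx k)) →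
        ((k : Fin K) → k.val < l.val → Fin (my k)) → Fin (mx l),
      ∀ ω, Jx l ω = f (fun t => (ω t).1) (fun k _ => Jx k ω) (fun k _ => Jy k ω))
    -- J_y^l = f_y^l(Yⁿ, J_x^{[1:l]}, J_y^{[1:l-1]})
    (hJy : ∀ l : Fin K, ∃ f : (Fin n → YA) →
        ((k : Fin K) → k.val ≤ l.val → Fin (mx k)) →
        ((k : Fin K) → k.val < l.val → Fin (my k)) → Fin (my l),
      ∀ ω, Jy l ω = f (fun t => (ω t).2.1) (fun k _ => Jx k ω) (fun k _ => Jy k ω))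
    :
    ∀ (t : Fin n) (l : Fin K),
      IT.condMutInfo (iidW p n)
        (fun ω => (Jy l ω, below t.val (fun s => (ω s).2.1)))
        (fun ω => ((ω t).1, (ω t).2.2))
        (fun ω => (trunc (l.val + 1) (fun k => Jx k ω), trunc l.val (fun k => Jy k ω),
          below t.val (fun s => (ω s).1), fromIdx t.val (fun s => (ω s).2.1))) = 0 := by
  classical
  intro t l
  set w := iidW p n with hw_def
  have hw : ∀ ω, 0 ≤ w ω := fun ω => Finset.prod_nonneg fun s _ => hp.1 _
  set Af : (Fin n → XA × YA × ZA) → Fin (my l) × (Fin n → Option YA) :=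
    fun ω => (Jy l ω, below t.val (fun s => (ω s).2.1)) with hAf_def
  set Bf : (Fin n → XA × YA × ZA) → XA × ZA := fun ω => ((ω t).1, (ω t).2.2) with hBf_def
  set Cf := fun ω : Fin n → XA × YA × ZA =>
      (trunc (l.val + 1) (fun k => Jx k ω), trunc l.val (fun k => Jy k ω),
        below t.val (fun s => (ω s).1), fromIdx t.val (fun s => (ω s).2.1)) with hCf_def
  apply IT.condMutInfo_eq_zero_of_indep w hw Af Bf Cf
  intro a b c
  by_cases hex : ∃ ω0, Cf ω0 = c
  case neg =>
    have z1 : dist w (fun ω => (Af ω, Bf ω, Cf ω)) (a, b, c) = 0 := by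
      unfold IT.dist
      exact Finset.sum_eq_zero fun ω _ =>
        if_neg fun h => hex ⟨ω, congrArg (fun y => y.2.2) h⟩
    have z2 : dist w Cf c = 0 := by
      unfold IT.dist
      exact Finset.sum_eq_zero fun ω _ => if_neg fun h => hex ⟨ω, h⟩
    have z3 : dist w (fun ω => (Af ω, Cf ω)) (a, c) = 0 := by
      unfold IT.dist
      exact Finset.sum_eq_zero fun ω _ =>
        if_neg fun h => hex ⟨ω, congrArg (fun y => y.2) h⟩
    have z4 : dist w (fun ω => (Bf ω, Cf ω)) (b, c) = 0 := by
      unfold IT.dist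
      exact Finset.sum_eq_zero fun ω _ =>
        if_neg fun h => hex ⟨ω, congrArg (fun y => y.2) h⟩
    rw [z1, z2, z3, z4]
  case pos =>
  obtain ⟨ω0, hc0⟩ := hex
  subst hc0
  -- chosen interactive encoders
  set fx := fun k => (hJx k).choose with hfx_def
  have hfx : ∀ (k : Fin K) ω, Jx k ω
      = fx k (fun s => (ω s).1) (fun k' _ => Jx k' ω) (fun k' _ => Jy k' ω) :=
    fun k => (hJx k).choose_spec
  set fy := fun k => (hJy k).choose with hfy_def
  have hfy : ∀ (k : Fin K) ω, Jy k ω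
      = fy k (fun s => (ω s).2.1) (fun k' _ => Jx k' ω) (fun k' _ => Jy k' ω) :=
    fun k => (hJy k).choose_spec
  set jxv : (k : Fin K) → Fin (mx k) := fun k => Jx k ω0 with hjxv_def
  set jyv : (k : Fin K) → Fin (my k) := fun k => Jy k ω0 with hjyv_def
  -- rectangle predicates on the separate sources
  set TX : (Fin n → XA) → Prop := fun x => ∀ k : Fin K, k.val ≤ l.val →
      fx k x (fun k' _ => jxv k') (fun k' _ => jyv k') = jxv k with hTX_def
  set TY : (Fin n → YA) → Prop := fun y => ∀ k : Fin K, k.val < l.val →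
      fy k y (fun k' _ => jxv k') (fun k' _ => jyv k') = jyv k with hTY_def
  -- substitution lemmas (forward direction of the rectangle property)
  have subJx : ∀ ω, (∀ k : Fin K, k.val ≤ l.val → Jx k ω = jxv k) →
      (∀ k : Fin K, k.val < l.val → Jy k ω = jyv k) →
      ∀ k : Fin K, k.val ≤ l.val →
        fx k (fun s => (ω s).1) (fun k' _ => jxv k') (fun k' _ => jyv k') = jxv k := by
    intro ω h1 h2 k hk
    have e1 : (fun (k' : Fin K) (_ : k'.val < k.val) => Jx k' ω)
        = (fun (k' : Fin K) (_ : k'.val < k.val) => jxv k') := by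
      funext k' hlt; exact h1 k' (by omega)
    have e2 : (fun (k' : Fin K) (_ : k'.val < k.val) => Jy k' ω)
        = (fun (k' : Fin K) (_ : k'.val < k.val) => jyv k') := by
      funext k' hlt; exact h2 k' (by omega)
    rw [← e1, ← e2, ← hfx k ω]
    exact h1 k hk
  have subJyLe : ∀ ω, (∀ k : Fin K, k.val ≤ l.val → Jx k ω = jxv k) →
      (∀ k : Fin K, k.val < l.val → Jy k ω = jyv k) →
      ∀ k : Fin K, k.val ≤ l.val →
        fy k (fun s => (ω s).2.1) (fun k' _ => jxv k') (fun k' _ => jyv k') = Jy k ω := by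
    intro ω h1 h2 k hk
    have e1 : (fun (k' : Fin K) (_ : k'.val ≤ k.val) => Jx k' ω)
        = (fun (k' : Fin K) (_ : k'.val ≤ k.val) => jxv k') := by
      funext k' hle; exact h1 k' (by omega)
    have e2 : (fun (k' : Fin K) (_ : k'.val < k.val) => Jy k' ω)
        = (fun (k' : Fin K) (_ : k'.val < k.val) => jyv k') := by
      funext k' hlt; exact h2 k' (by omega)
    rw [← e1, ← e2, ← hfy k ω]
  -- backward direction of the rectangle property, by induction on the round
  have back : ∀ ω, TX (fun s => (ω s).1) → TY (fun s => (ω s).2.1) → ∀ m : ℕ,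
      (∀ k : Fin K, k.val < m → k.val ≤ l.val → Jx k ω = jxv k) ∧
      (∀ k : Fin K, k.val < m → k.val < l.val → Jy k ω = jyv k) := by
    intro ω htx hty m
    simp only [hTX_def] at htx
    simp only [hTY_def] at hty
    induction m with
    | zero => exact ⟨fun k hk => absurd hk (Nat.not_lt_zero _),
        fun k hk => absurd hk (Nat.not_lt_zero _)⟩
    | succ m ih =>
      have hx : ∀ k : Fin K, k.val < m + 1 → k.val ≤ l.val → Jx k ω = jxv k := by
        intro k hk hkl
        rcases Nat.lt_succ_iff_lt_or_eq.mp hk with h | h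
        · exact ih.1 k h hkl
        · have e1 : (fun (k' : Fin K) (_ : k'.val < k.val) => Jx k' ω)
              = (fun (k' : Fin K) (_ : k'.val < k.val) => jxv k') := by
            funext k' hlt; exact ih.1 k' (by omega) (by omega)
          have e2 : (fun (k' : Fin K) (_ : k'.val < k.val) => Jy k' ω)
              = (fun (k' : Fin K) (_ : k'.val < k.val) => jyv k') := by
            funext k' hlt; exact ih.2 k' (by omega) (by omega)
          rw [hfx k ω, e1, e2]
          exact htx k hkl
      have hy : ∀ k : Fin K, k.val < m + 1 → k.val < l.val → Jy k ω = jyv k := by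
        intro k hk hkl
        rcases Nat.lt_succ_iff_lt_or_eq.mp hk with h | h
        · exact ih.2 k h hkl
        · have e1 : (fun (k' : Fin K) (_ : k'.val ≤ k.val) => Jx k' ω)
              = (fun (k' : Fin K) (_ : k'.val ≤ k.val) => jxv k') := by
            funext k' hle; exact hx k' (by omega) (by omega)
          have e2 : (fun (k' : Fin K) (_ : k'.val < k.val) => Jy k' ω)
              = (fun (k' : Fin K) (_ : k'.val < k.val) => jyv k') := by
            funext k' hlt; exact ih.2 k' (by omega) (by omega)
          rw [hfy k ω, e1, e2]
          exact hty k hkl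
      exact ⟨hx, hy⟩
  -- reconstruction of sources from masked halves
  set arb : XA × YA × ZA := ω0 t with harb_def
  set xrec : (Fin n → Option (XA × YA × ZA)) → Fin n → XA :=
    fun v s => if t.val ≤ s.val then ((v s).getD arb).1 else (ω0 s).1 with hxrec_def
  set yrec : (Fin n → Option (XA × YA × ZA)) → Fin n → YA :=
    fun u s => if s.val < t.val then ((u s).getD arb).2.1 else (ω0 s).2.1 with hyrec_def
  have mapX : ∀ ω : Fin n → XA × YA × ZA,
      (fun s => (below t.val ω s).map (fun g => g.1)) = below t.val (fun s => (ω s).1) := by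
    intro ω; funext s; by_cases h : s.val < t.val <;> simp [below, h]
  have mapYb : ∀ ω : Fin n → XA × YA × ZA,
      (fun s => (below t.val ω s).map (fun g => g.2.1)) = below t.val (fun s => (ω s).2.1) := by
    intro ω; funext s; by_cases h : s.val < t.val <;> simp [below, h]
  have mapYf : ∀ ω : Fin n → XA × YA × ZA,
      (fun s => (fromIdx t.val ω s).map (fun g => g.2.1))
        = fromIdx t.val (fun s => (ω s).2.1) := by
    intro ω; funext s; by_cases h : t.val ≤ s.val <;> simp [fromIdx, h]
  have yrec_eq : ∀ ω : Fin n → XA × YA × ZA,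
      fromIdx t.val (fun s => (ω s).2.1) = fromIdx t.val (fun s => (ω0 s).2.1) →
      yrec (below t.val ω) = fun s => (ω s).2.1 := by
    intro ω h
    funext s
    simp only [hyrec_def]
    by_cases hs : s.val < t.val
    · have hb : below t.val ω s = some (ω s) := by simp [below, hs]
      rw [if_pos hs, hb]
      rfl
    · have h' := congrFun h s
      have ht : t.val ≤ s.val := Nat.le_of_not_lt hs
      simp only [fromIdx, if_pos ht] at h'
      rw [if_neg hs]
      exact (Option.some.inj h').symm
  have xrec_eq : ∀ ω : Fin n → XA × YA × ZA,
      below t.val (fun s => (ω s).1) = below t.val (fun s => (ω0 s).1) →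
      xrec (fromIdx t.val ω) = fun s => (ω s).1 := by
    intro ω h
    funext s
    simp only [hxrec_def]
    by_cases hs : t.val ≤ s.val
    · have hb : fromIdx t.val ω s = some (ω s) := by simp [fromIdx, hs]
      rw [if_pos hs, hb]
      rfl
    · have h' := congrFun h s
      have ht : s.val < t.val := Nat.lt_of_not_le hs
      simp only [below, if_pos ht] at h'
      rw [if_neg hs]
      exact (Option.some.inj h').symm
  -- transcript equality in terms of pointwise message equalities
  have transcript_iff : ∀ ω,
      (trunc (l.val + 1) (fun k => Jx k ω) = trunc (l.val + 1) (fun k => Jx k ω0)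
        ∧ trunc l.val (fun k => Jy k ω) = trunc l.val (fun k => Jy k ω0))
      ↔ ((∀ k : Fin K, k.val ≤ l.val → Jx k ω = jxv k)
          ∧ (∀ k : Fin K, k.val < l.val → Jy k ω = jyv k)) := by
    intro ω
    rw [trunc_eq_trunc_iff, trunc_eq_trunc_iff]
    simp only [hjxv_def, hjyv_def]
    constructor
    · rintro ⟨h1, h2⟩
      exact ⟨fun k hk => h1 k (by omega), h2⟩
    · rintro ⟨h1, h2⟩
      exact ⟨fun k hk => h1 k (by omega), h2⟩
  -- the four masked predicates
  set P : (Fin n → Option (XA × YA × ZA)) → Prop := fun u =>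
    ((fun s => (u s).map (fun g => g.1)) = below t.val (fun s => (ω0 s).1))
      ∧ TY (yrec u) with hP_def
  set Q : (Fin n → Option (XA × YA × ZA)) → Prop := fun v =>
    ((fun s => (v s).map (fun g => g.2.1)) = fromIdx t.val (fun s => (ω0 s).2.1))
      ∧ TX (xrec v) with hQ_def
  set PA : (Fin n → Option (XA × YA × ZA)) → Prop := fun u =>
    (fy l (yrec u) (fun k' _ => jxv k') (fun k' _ => jyv k') = a.1)
      ∧ ((fun s => (u s).map (fun g => g.2.1)) = a.2) with hPA_def
  set QB : (Fin n → Option (XA × YA × ZA)) → Prop := fun v =>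
    (((v t).getD arb).1 = b.1 ∧ ((v t).getD arb).2.2 = b.2) with hQB_def
  -- event equivalences
  have EC : ∀ ω, Cf ω = Cf ω0 ↔ (P (below t.val ω) ∧ Q (fromIdx t.val ω)) := by
    intro ω
    simp only [hCf_def, Prod.mk.injEq, hP_def, hQ_def]
    constructor
    · rintro ⟨h1, h2, h3, h4⟩
      obtain ⟨hjx, hjy⟩ := (transcript_iff ω).mp ⟨h1, h2⟩
      refine ⟨⟨(mapX ω).trans h3, ?_⟩, (mapYf ω).trans h4, ?_⟩
      · rw [yrec_eq ω h4]
        simp only [hTY_def]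
        intro k hk
        rw [subJyLe ω hjx hjy k (le_of_lt hk)]
        exact hjy k hk
      · rw [xrec_eq ω h3]
        simp only [hTX_def]
        exact subJx ω hjx hjy
    · rintro ⟨⟨hP1, hP2⟩, hQ1, hQ2⟩
      have h3 : below t.val (fun s => (ω s).1) = below t.val (fun s => (ω0 s).1) :=
        (mapX ω).symm.trans hP1
      have h4 : fromIdx t.val (fun s => (ω s).2.1)
          = fromIdx t.val (fun s => (ω0 s).2.1) := (mapYf ω).symm.trans hQ1
      have hTXω : TX (fun s => (ω s).1) := xrec_eq ω h3 ▸ hQ2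
      have hTYω : TY (fun s => (ω s).2.1) := yrec_eq ω h4 ▸ hP2
      obtain ⟨bx, byy⟩ := back ω hTXω hTYω K
      have hjx : ∀ k : Fin K, k.val ≤ l.val → Jx k ω = jxv k := fun k hk => bx k k.isLt hk
      have hjy : ∀ k : Fin K, k.val < l.val → Jy k ω = jyv k := fun k hk => byy k k.isLt hk
      obtain ⟨h1, h2⟩ := (transcript_iff ω).mpr ⟨hjx, hjy⟩
      exact ⟨h1, h2, h3, h4⟩
  have hfromt : ∀ ω : Fin n → XA × YA × ZA, fromIdx t.val ω t = some (ω t) := by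
    intro ω; simp [fromIdx]
  have EB : ∀ ω, Bf ω = b ↔ QB (fromIdx t.val ω) := by
    intro ω
    simp only [hBf_def, hQB_def, hfromt ω, Option.getD_some, Prod.ext_iff]
  have hJyl : ∀ ω, (∀ k : Fin K, k.val ≤ l.val → Jx k ω = jxv k) →
      (∀ k : Fin K, k.val < l.val → Jy k ω = jyv k) →
      Jy l ω = fy l (fun s => (ω s).2.1) (fun k' _ => jxv k') (fun k' _ => jyv k') :=
    fun ω h1 h2 => (subJyLe ω h1 h2 l (le_refl _)).symm
  have EA : ∀ ω, (Af ω = a ∧ Cf ω = Cf ω0)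
      ↔ ((P (below t.val ω) ∧ PA (below t.val ω)) ∧ Q (fromIdx t.val ω)) := by
    intro ω
    constructor
    · rintro ⟨hA, hC⟩
      obtain ⟨hPu, hQv⟩ := (EC ω).mp hC
      have hC' := hC
      simp only [hCf_def, Prod.mk.injEq] at hC'
      obtain ⟨h1, h2, h3, h4⟩ := hC'
      obtain ⟨hjx, hjy⟩ := (transcript_iff ω).mp ⟨h1, h2⟩
      have hA' := hA
      simp only [hAf_def, Prod.ext_iff] at hA'
      refine ⟨⟨hPu, ?_⟩, hQv⟩
      simp only [hPA_def]
      refine ⟨?_, ?_⟩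
      · rw [yrec_eq ω h4, ← hJyl ω hjx hjy]
        exact hA'.1
      · rw [mapYb ω]
        exact hA'.2
    · rintro ⟨⟨hPu, hPAu⟩, hQv⟩
      have hC : Cf ω = Cf ω0 := (EC ω).mpr ⟨hPu, hQv⟩
      have hC' := hC
      simp only [hCf_def, Prod.mk.injEq] at hC'
      obtain ⟨h1, h2, h3, h4⟩ := hC'
      obtain ⟨hjx, hjy⟩ := (transcript_iff ω).mp ⟨h1, h2⟩
      simp only [hPA_def] at hPAu
      refine ⟨?_, hC⟩
      simp only [hAf_def, Prod.ext_iff]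
      refine ⟨?_, ?_⟩
      · rw [hJyl ω hjx hjy, ← yrec_eq ω h4]
        exact hPAu.1
      · rw [← mapYb ω]
        exact hPAu.2
  -- rewrite the four distributions as probabilities of rectangle events
  have D1 : dist w (fun ω => (Af ω, Bf ω, Cf ω)) (a, b, Cf ω0)
      = pr w (fun ω => (fun u => P u ∧ PA u) (below t.val ω)
          ∧ (fun v => Q v ∧ QB v) (fromIdx t.val ω)) := by
    show pr w (fun ω => (Af ω, Bf ω, Cf ω) = (a, b, Cf ω0)) = _
    refine pr_congr w fun ω => ?_
    simp only [Prod.mk.injEq]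
    constructor
    · rintro ⟨hA, hB, hC⟩
      obtain ⟨⟨hPu, hPAu⟩, hQv⟩ := (EA ω).mp ⟨hA, hC⟩
      exact ⟨⟨hPu, hPAu⟩, hQv, (EB ω).mp hB⟩
    · rintro ⟨⟨hPu, hPAu⟩, hQv, hQBv⟩
      obtain ⟨hA, hC⟩ := (EA ω).mpr ⟨⟨hPu, hPAu⟩, hQv⟩
      exact ⟨hA, (EB ω).mpr hQBv, hC⟩
  have D2 : dist w Cf (Cf ω0)
      = pr w (fun ω => P (below t.val ω) ∧ Q (fromIdx t.val ω)) := by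
    show pr w (fun ω => Cf ω = Cf ω0) = _
    exact pr_congr w fun ω => EC ω
  have D3 : dist w (fun ω => (Af ω, Cf ω)) (a, Cf ω0)
      = pr w (fun ω => (fun u => P u ∧ PA u) (below t.val ω) ∧ Q (fromIdx t.val ω)) := by
    show pr w (fun ω => (Af ω, Cf ω) = (a, Cf ω0)) = _
    refine pr_congr w fun ω => ?_
    simp only [Prod.mk.injEq]
    exact EA ω
  have D4 : dist w (fun ω => (Bf ω, Cf ω)) (b, Cf ω0)
      = pr w (fun ω => P (below t.val ω) ∧ (fun v => Q v ∧ QB v) (fromIdx t.val ω)) := by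
    show pr w (fun ω => (Bf ω, Cf ω) = (b, Cf ω0)) = _
    refine pr_congr w fun ω => ?_
    simp only [Prod.mk.injEq]
    constructor
    · rintro ⟨hB, hC⟩
      obtain ⟨hPu, hQv⟩ := (EC ω).mp hC
      exact ⟨hPu, hQv, (EB ω).mp hB⟩
    · rintro ⟨hPu, hQv, hQBv⟩
      exact ⟨(EB ω).mpr hQBv, (EC ω).mpr ⟨hPu, hQv⟩⟩
  rw [D1, D2, D3, D4, hw_def]
  exact pr_mul_pr_swap p n t.val (fun u => P u ∧ PA u) P (fun v => Q v ∧ QB v) Q
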